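/- Let C be a nodal curve of genus g ≥ 2, X a component, and e_bar a multidegree of total degree e that is semistable. Suppose Y is a nonempty connected proper subcurve with X ⊆ Y and that some connected component Z of Y' satisfies e_Z − (e/(2g−2))·deg(ω_C|_Z) < −1/2 while every connected component W of Y' satisfies e_W − (e/(2g−2))·deg(ω_C|_W) ≤ 1/2. Then e_bar is X-quasistable at Y, i.e. e_Y − (e/(2g−2))·deg(ω_C|_Y) > −k_Y/2. -/
import Mathlib


open Finset

/-- An abstract (combinatorial) model of a nodal curve: a finite set of irreducible
components `V` (with geometric genus `w v`), and a finite set of nodes `N`, each node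
lying on the (unordered pair of) components recorded by `ends`. -/
structure NodalCurve where
  V : Type
  N : Type
  [instFV : Fintype V]
  [instDV : DecidableEq V]
  [instFN : Fintype N]
  [instDN : DecidableEq N]
  ends : N → Sym2 V
  w : V → ℕ

namespace NodalCurve

variable (C : NodalCurve)

instance : Fintype C.V := C.instFV
instance : DecidableEq C.V := C.instDV
instance : Fintype C.N := C.instFN
instance : DecidableEq C.N := C.instDN

/-- The dual graph of the curve (as a simple graph on the components). -/
def graph : SimpleGraph C.V :=
  SimpleGraph.fromRel (fun u v => ∃ n, C.ends n = s(u, v))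

/-- The number of branches (ends) of the node `n` lying on the subcurve `S`. -/
def endsIn (S : Finset C.V) (n : C.N) : ℕ :=
  Sym2.lift ⟨fun a b => (if a ∈ S then 1 else 0) + (if b ∈ S then 1 else 0),
    fun _ _ => add_comm _ _⟩ (C.ends n)

/-- `k S = #(Y ∩ Y')`: the number of nodes where the subcurve `S` meets its complement. -/
def k (S : Finset C.V) : ℕ := (univ.filter fun n => C.endsIn S n = 1).card

/-- nodes both of whose branches lie on `S`. -/
def internalNodes (S : Finset C.V) : ℕ := (univ.filter fun n => C.endsIn S n = 2).card

/-- The (arithmetic) genus of the curve. -/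
def genus : ℤ :=
  ∑ v, (C.w v : ℤ) + (Fintype.card C.N : ℤ) - (Fintype.card C.V : ℤ) + 1

/-- The genus `1 - χ(O_Y)` of a (connected) subcurve with components `S`. -/
def genusSub (S : Finset C.V) : ℤ :=
  ∑ v ∈ S, (C.w v : ℤ) + (C.internalNodes S : ℤ) - (S.card : ℤ) + 1

/-- `χ(O_Y)` for the subcurve `Y` with components `S`. -/
def chiO (S : Finset C.V) : ℤ :=
  (S.card : ℤ) - ∑ v ∈ S, (C.w v : ℤ) - (C.internalNodes S : ℤ)

/-- The degree of `ω_C` restricted to the subcurve with components `S`. -/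
def degω (S : Finset C.V) : ℤ :=
  ∑ v ∈ S, (2 * (C.w v : ℤ) - 2) + ∑ n, (C.endsIn S n : ℤ)

/-- Connectedness of the subcurve with components `S`. -/
def connectedSub (S : Finset C.V) : Prop := (C.graph.induce (S : Set C.V)).Connected

/-- Connectedness of the curve. -/
def Conn : Prop := C.graph.Connected

/-- The curve is of compact type: every node is separating, i.e. the dual graph
(with its multiple edges and loops) is a tree. -/
def CompactType : Prop :=
  Function.Injective C.ends ∧ (∀ n, ¬ (C.ends n).IsDiag) ∧ C.graph.IsTree

/-- Deligne–Mumford stability. -/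
def Stable : Prop := ∀ v, 0 < 2 * (C.w v : ℤ) - 2 + ∑ n, (C.endsIn {v} n : ℤ)

/-- A tail: a subcurve meeting its complement in exactly one node. -/
def isTail (S : Finset C.V) : Prop := C.k S = 1

/-- The degree `d_Y` of a multidegree `e` on the subcurve with components `S`. -/
def degSub (e : C.V → ℤ) (S : Finset C.V) : ℤ := ∑ v ∈ S, e v

/-- The total degree of a multidegree. -/
def totalDeg (e : C.V → ℤ) : ℤ := ∑ v, e v

/-- Semistability (w.r.t. the canonical polarization) at the subcurve `S`:
`|d_Y - d·deg(ω_C|_Y)/(2g-2)| ≤ k_Y/2`. -/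
def semistableAt (e : C.V → ℤ) (S : Finset C.V) : Prop :=
  |(C.degSub e S : ℚ) - (C.totalDeg e : ℚ) * (C.degω S : ℚ) / (2 * (C.genus : ℚ) - 2)|
    ≤ (C.k S : ℚ) / 2

/-- The strict lower inequality of quasistability at the subcurve `S`:
`d_Y - d·deg(ω_C|_Y)/(2g-2) > -k_Y/2`. -/
def quasistableLowAt (e : C.V → ℤ) (S : Finset C.V) : Prop :=
  -((C.k S : ℚ) / 2) <
    (C.degSub e S : ℚ) - (C.totalDeg e : ℚ) * (C.degω S : ℚ) / (2 * (C.genus : ℚ) - 2)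

/-- A semistable multidegree. -/
def semistable (e : C.V → ℤ) : Prop :=
  ∀ S : Finset C.V, S.Nonempty → S ≠ univ → C.semistableAt e S

/-- An `X`-quasistable multidegree. -/
def Xquasistable (X : C.V) (e : C.V → ℤ) : Prop :=
  C.semistable e ∧
    ∀ S : Finset C.V, S.Nonempty → S ≠ univ → X ∈ S → C.quasistableLowAt e S

/-- A `d̄`-big tail: `d_Z·deg(ω_C) - d·deg(ω_C|_Z) < 2g_Z - g`. -/
def isBigTail (e : C.V → ℤ) (S : Finset C.V) : Prop :=
  C.isTail S ∧
    C.degSub e S * (2 * C.genus - 2) - C.totalDeg e * C.degω S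
      < 2 * C.genusSub S - C.genus

/-- `S` is (the set of components of) a connected component of the complement `X'`
of the irreducible component `x`. -/
def complComponent (x : C.V) (S : Finset C.V) : Prop :=
  x ∉ S ∧ S.Nonempty ∧ C.connectedSub S ∧
    ∀ u ∈ S, ∀ v : C.V, C.graph.Adj u v → v ≠ x → v ∈ S

/-- `T` is (the set of components of) a connected component of the subcurve `S`. -/
def subComponent (S T : Finset C.V) : Prop :=
  T ⊆ S ∧ T.Nonempty ∧ C.connectedSub T ∧
    ∀ u ∈ T, ∀ v ∈ S, C.graph.Adj u v → v ∈ T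

/-- A central component: every connected component `Z` of `X'` has `g_Z < g/2`. -/
def central (x : C.V) : Prop :=
  ∀ S : Finset C.V, C.complComponent x S → 2 * C.genusSub S < C.genus

/-- A semicentral component: every connected component `Z` of `X'` has `g_Z ≤ g/2`. -/
def semicentral (x : C.V) : Prop :=
  ∀ S : Finset C.V, C.complComponent x S → 2 * C.genusSub S ≤ C.genus

end NodalCurve

namespace NodalCurve

variable (C : NodalCurve)

lemma exists_rep' (n : C.N) : ∃ u v, C.ends n = s(u, v) := by
  induction C.ends n using Sym2.ind with
  | _ u v => exact ⟨u, v, rfl⟩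

lemma endsIn_eq_aux (S : Finset C.V) (n : C.N) (u v : C.V) (h : C.ends n = s(u, v)) :
    C.endsIn S n = (if u ∈ S then 1 else 0) + (if v ∈ S then 1 else 0) := by
  rw [endsIn, h, Sym2.lift_mk]

lemma endsIn_union' (S T : Finset C.V) (hd : Disjoint S T) (n : C.N) :
    C.endsIn (S ∪ T) n = C.endsIn S n + C.endsIn T n := by
  obtain ⟨u, v, h⟩ := C.exists_rep' n
  rw [C.endsIn_eq_aux _ n u v h, C.endsIn_eq_aux _ n u v h, C.endsIn_eq_aux _ n u v h]
  have hu : ¬(u ∈ S ∧ u ∈ T) := fun h => Finset.disjoint_left.mp hd h.1 h.2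
  have hv : ¬(v ∈ S ∧ v ∈ T) := fun h => Finset.disjoint_left.mp hd h.1 h.2
  simp only [Finset.mem_union]
  by_cases h1 : u ∈ S <;> by_cases h2 : u ∈ T <;> by_cases h3 : v ∈ S <;>
    by_cases h4 : v ∈ T <;> simp_all

lemma endsIn_compl' (S : Finset C.V) (n : C.N) :
    C.endsIn S n + C.endsIn Sᶜ n = 2 := by
  obtain ⟨u, v, h⟩ := C.exists_rep' n
  rw [C.endsIn_eq_aux _ n u v h, C.endsIn_eq_aux _ n u v h]
  simp only [Finset.mem_compl]
  by_cases hu : u ∈ S <;> by_cases hv : v ∈ S <;> simp [hu, hv]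

lemma k_union' (S T : Finset C.V) (hd : Disjoint S T)
    (hc : ∀ n, C.endsIn S n = 0 ∨ C.endsIn T n = 0) :
    C.k (S ∪ T) = C.k S + C.k T := by
  classical
  have hset : (univ.filter fun n => C.endsIn (S ∪ T) n = 1)
      = (univ.filter fun n => C.endsIn S n = 1) ∪ (univ.filter fun n => C.endsIn T n = 1) := by
    ext n
    simp only [Finset.mem_filter, Finset.mem_union, Finset.mem_univ, true_and,
      C.endsIn_union' S T hd n]
    rcases hc n with h | h <;> omega
  have hdisj : Disjoint (univ.filter fun n => C.endsIn S n = 1)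
      (univ.filter fun n => C.endsIn T n = 1) := by
    rw [Finset.disjoint_left]
    intro n hn hn'
    simp only [Finset.mem_filter] at hn hn'
    rcases hc n with h | h <;> omega
  rw [k, hset, Finset.card_union_of_disjoint hdisj, k, k]

lemma k_compl' (S : Finset C.V) : C.k S = C.k Sᶜ := by
  unfold k
  congr 1
  ext n
  have := C.endsIn_compl' S n
  simp only [Finset.mem_filter, Finset.mem_univ, true_and]
  omega

lemma degSub_union' (e : C.V → ℤ) (S T : Finset C.V) (hd : Disjoint S T) :
    C.degSub e (S ∪ T) = C.degSub e S + C.degSub e T :=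
  Finset.sum_union hd

lemma degω_union' (S T : Finset C.V) (hd : Disjoint S T) :
    C.degω (S ∪ T) = C.degω S + C.degω T := by
  unfold degω
  rw [Finset.sum_union hd]
  have h : ∀ n ∈ (univ : Finset C.N), (C.endsIn (S ∪ T) n : ℤ)
      = (C.endsIn S n : ℤ) + (C.endsIn T n : ℤ) := by
    intro n _
    rw [C.endsIn_union' S T hd n]
    push_cast
    ring
  rw [Finset.sum_congr rfl h, Finset.sum_add_distrib]
  ring

lemma degω_univ' : C.degω (univ : Finset C.V) = 2 * C.genus - 2 := by
  unfold degω genus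
  have h : ∀ n ∈ (univ : Finset C.N), (C.endsIn (univ : Finset C.V) n : ℤ) = 2 := by
    intro n _
    obtain ⟨u, v, hn⟩ := C.exists_rep' n
    rw [C.endsIn_eq_aux _ n u v hn]
    simp
  rw [Finset.sum_congr rfl h, Finset.sum_const, Finset.sum_sub_distrib, Finset.sum_const]
  simp only [Finset.card_univ, smul_eq_mul, mul_comm]
  rw [← Finset.mul_sum]
  ring

lemma degSub_univ' (e : C.V → ℤ) : C.degSub e (univ : Finset C.V) = C.totalDeg e := rfl

end NodalCurve

/-- if `e` is semistable, `Y` is a nonempty connected proper subcurve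
containing `X`, some connected component `Z` of `Y'` satisfies
`e_Z - (e/(2g-2))·deg(ω_C|_Z) < -1/2`, and every connected component `W` of `Y'`
satisfies `e_W - (e/(2g-2))·deg(ω_C|_W) ≤ 1/2`, then `e` is `X`-quasistable at `Y`. -/
theorem quasistableLowAt_of_component_bounds (C : NodalCurve) (hconn : C.Conn)
    (hg : 2 ≤ C.genus) (X : C.V) (e : C.V → ℤ) (hss : C.semistable e)
    (Y : Finset C.V) (h1 : Y.Nonempty) (h2 : Y ≠ Finset.univ)
    (h3 : C.connectedSub Y) (hXY : X ∈ Y)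
    (hZ : ∃ Z : Finset C.V, C.subComponent Yᶜ Z ∧
        (C.degSub e Z : ℚ) - (C.totalDeg e : ℚ) * (C.degω Z : ℚ)
            / (2 * (C.genus : ℚ) - 2) < -(1 / 2))
    (hW : ∀ W : Finset C.V, C.subComponent Yᶜ W →
        (C.degSub e W : ℚ) - (C.totalDeg e : ℚ) * (C.degω W : ℚ)
            / (2 * (C.genus : ℚ) - 2) ≤ 1 / 2) :
    C.quasistableLowAt e Y := by
  classical
  set d : ℚ := (C.totalDeg e : ℚ) with hd
  set D : ℚ := 2 * (C.genus : ℚ) - 2 with hD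
  have hDpos : 0 < D := by
    have : (2 : ℚ) ≤ (C.genus : ℚ) := by exact_mod_cast hg
    rw [hD]; linarith
  have hDne : D ≠ 0 := ne_of_gt hDpos
  by_contra hcon
  unfold NodalCurve.quasistableLowAt at hcon
  push_neg at hcon
  have hssY := hss Y h1 h2
  unfold NodalCurve.semistableAt at hssY
  have hYlow : -((C.k Y : ℚ) / 2) ≤ (C.degSub e Y : ℚ) - d * (C.degω Y : ℚ) / D :=
    neg_le_of_abs_le hssY
  have hEq : (C.degSub e Y : ℚ) - d * (C.degω Y : ℚ) / D = -((C.k Y : ℚ) / 2) :=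
    le_antisymm hcon hYlow
  obtain ⟨Z, hZc, hZlt⟩ := hZ
  obtain ⟨hZsub, hZne, hZconn, hZclose⟩ := hZc
  set R : Finset C.V := Yᶜ \ Z with hR
  have hZR : Z ∪ R = Yᶜ := Finset.union_sdiff_of_subset hZsub
  have hdisjZR : Disjoint Z R := Finset.disjoint_sdiff
  -- no node crosses between Z and R
  have hcross : ∀ n, C.endsIn Z n = 0 ∨ C.endsIn R n = 0 := by
    intro n
    by_contra hcontra
    push_neg at hcontra
    obtain ⟨hZ0, hR0⟩ := hcontra
    obtain ⟨u, v, hn⟩ := C.exists_rep' n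
    rw [C.endsIn_eq_aux Z n u v hn] at hZ0
    rw [C.endsIn_eq_aux R n u v hn] at hR0
    have h1' : u ∈ Z ∨ v ∈ Z := by by_contra h; push_neg at h; simp [h.1, h.2] at hZ0
    have h2' : u ∈ R ∨ v ∈ R := by by_contra h; push_neg at h; simp [h.1, h.2] at hR0
    have hZRmem : ∀ a, a ∈ Z → a ∉ R := fun a ha => Finset.disjoint_left.mp hdisjZR ha
    rcases h1' with hu | hv
    · rcases h2' with hu' | hv'
      · exact hZRmem u hu hu'
      · -- u ∈ Z, v ∈ R
        have hne : u ≠ v := fun h => hZRmem u hu (h ▸ hv')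
        have hadj : C.graph.Adj u v := by
          rw [NodalCurve.graph, SimpleGraph.fromRel_adj]
          exact ⟨hne, Or.inl ⟨n, hn⟩⟩
        have hvY : v ∈ Yᶜ := (Finset.sdiff_subset) hv'
        exact hZRmem v (hZclose u hu v hvY hadj) hv'
    · rcases h2' with hu' | hv'
      · -- v ∈ Z, u ∈ R
        have hne : v ≠ u := fun h => hZRmem v hv (h ▸ hu')
        have hadj : C.graph.Adj v u := by
          rw [NodalCurve.graph, SimpleGraph.fromRel_adj]
          exact ⟨hne, Or.inr ⟨n, hn⟩⟩
        have huY : u ∈ Yᶜ := (Finset.sdiff_subset) hu'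
        exact hZRmem u (hZclose v hv u huY hadj) hu'
      · exact hZRmem v hv hv'
  -- additivity over Yᶜ = Z ∪ R
  have hkadd : C.k Yᶜ = C.k Z + C.k R := by
    rw [← hZR]; exact C.k_union' Z R hdisjZR hcross
  have hkY : C.k Y = C.k Yᶜ := C.k_compl' Y
  have hdegSubAdd : C.degSub e Yᶜ = C.degSub e Z + C.degSub e R := by
    rw [← hZR]; exact C.degSub_union' e Z R hdisjZR
  have hdegωAdd : C.degω Yᶜ = C.degω Z + C.degω R := by
    rw [← hZR]; exact C.degω_union' Z R hdisjZR
  -- complement relations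
  have hdisjY : Disjoint Y Yᶜ := disjoint_compl_right
  have hYunion : Y ∪ Yᶜ = Finset.univ := Finset.union_compl Y
  have hdegSubC : C.degSub e Y + C.degSub e Yᶜ = C.totalDeg e := by
    rw [← C.degSub_univ' e, ← hYunion]; exact (C.degSub_union' e Y Yᶜ hdisjY).symm
  have hdegωC : C.degω Y + C.degω Yᶜ = 2 * C.genus - 2 := by
    rw [← C.degω_univ', ← hYunion]; exact (C.degω_union' Y Yᶜ hdisjY).symm
  -- phi of complement
  have hφC : ((C.degSub e Y : ℚ) - d * (C.degω Y : ℚ) / D)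
      + ((C.degSub e Yᶜ : ℚ) - d * (C.degω Yᶜ : ℚ) / D) = 0 := by
    have e1 : (C.degSub e Y : ℚ) + (C.degSub e Yᶜ : ℚ) = d := by
      rw [hd]; exact_mod_cast congrArg (Int.cast : ℤ → ℚ) hdegSubC
    have e2 : (C.degω Y : ℚ) + (C.degω Yᶜ : ℚ) = D := by
      rw [hD]
      have := congrArg (Int.cast : ℤ → ℚ) hdegωC
      push_cast at this
      linarith
    have : d * ((C.degω Y : ℚ) + (C.degω Yᶜ : ℚ)) / D = d := by
      rw [e2, mul_div_assoc, div_self hDne, mul_one]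
    calc ((C.degSub e Y : ℚ) - d * (C.degω Y : ℚ) / D)
        + ((C.degSub e Yᶜ : ℚ) - d * (C.degω Yᶜ : ℚ) / D)
        = ((C.degSub e Y : ℚ) + (C.degSub e Yᶜ : ℚ))
          - d * ((C.degω Y : ℚ) + (C.degω Yᶜ : ℚ)) / D := by ring
      _ = d - d := by rw [e1, this]
      _ = 0 := by ring
  -- phi of Yᶜ splits
  have hφsplit : (C.degSub e Yᶜ : ℚ) - d * (C.degω Yᶜ : ℚ) / D
      = ((C.degSub e Z : ℚ) - d * (C.degω Z : ℚ) / D)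
        + ((C.degSub e R : ℚ) - d * (C.degω R : ℚ) / D) := by
    have e1 : (C.degSub e Yᶜ : ℚ) = (C.degSub e Z : ℚ) + (C.degSub e R : ℚ) := by
      exact_mod_cast congrArg (Int.cast : ℤ → ℚ) hdegSubAdd
    have e2 : (C.degω Yᶜ : ℚ) = (C.degω Z : ℚ) + (C.degω R : ℚ) := by
      exact_mod_cast congrArg (Int.cast : ℤ → ℚ) hdegωAdd
    rw [e1, e2]; ring
  -- bound on phi R
  have hφR : (C.degSub e R : ℚ) - d * (C.degω R : ℚ) / D ≤ (C.k R : ℚ) / 2 := by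
    rcases R.eq_empty_or_nonempty with hRe | hRne
    · have hk0 : C.k R = 0 := by
        rw [hRe]
        unfold NodalCurve.k
        rw [Finset.card_eq_zero, Finset.filter_eq_empty_iff]
        intro n _
        obtain ⟨u, v, hn⟩ := C.exists_rep' n
        rw [C.endsIn_eq_aux _ n u v hn]
        simp
      have hds : C.degSub e R = 0 := by rw [hRe]; simp [NodalCurve.degSub]
      have hdw : C.degω R = 0 := by
        rw [hRe]
        unfold NodalCurve.degω
        have : ∀ n ∈ (univ : Finset C.N), (C.endsIn (∅ : Finset C.V) n : ℤ) = 0 := by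
          intro n _
          obtain ⟨u, v, hn⟩ := C.exists_rep' n
          rw [C.endsIn_eq_aux _ n u v hn]
          simp
        rw [Finset.sum_congr rfl this]
        simp
      rw [hk0, hds, hdw]
      simp
    · have hRuniv : R ≠ Finset.univ := by
        intro h
        have : X ∈ R := h ▸ Finset.mem_univ X
        have : X ∈ Yᶜ := Finset.sdiff_subset this
        exact (Finset.mem_compl.mp this) hXY
      have := hss R hRne hRuniv
      unfold NodalCurve.semistableAt at this
      exact le_of_abs_le this
  -- conclude
  have hkZnn : (0 : ℚ) ≤ (C.k Z : ℚ) := by positivity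
  have hkq : (C.k Y : ℚ) = (C.k Z : ℚ) + (C.k R : ℚ) := by
    rw [hkY]; exact_mod_cast congrArg (Nat.cast : ℕ → ℚ) hkadd
  -- φ Yᶜ = k Y / 2 = (k Z + k R)/2, φ Z = φ Yᶜ - φ R ≥ k Z / 2 ≥ 0 > -1/2
  rw [hEq] at hφC
  rw [hφsplit] at hφC
  rw [hkq] at hφC
  linarith [hZlt, hφR, hkZnn, hφC]
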